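/- In the setting of the previous algorithm (pick i ∈ {1,2} uniformly, draw Bernoulli(p_i), stop at first success, output Y = 1 iff success from population 1), let N1 be the number of samples drawn from population 1. Then conditional on Y = 1, N1 has a geometric distribution on {1,2,...} with parameter (p1+p2)/(1+p2); in particular E[N1 | Y=1] = (1+p2)/(p1+p2). -/

import Mathlib

/-- `P[N1 = n, Y = 1]` for the RR/LRR inner algorithm: the trajectory consists of `n-1`
failures from population 1 and `m` failures from population 2 (in any order, `m` arbitrary),
followed by a success from population 1; each population-1 failure has probability
`(1-p1)/2`, each population-2 failure `(1-p2)/2`, and the final success `p1/2`. -/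
noncomputable def probN1Y1 (p1 p2 : ℝ) (n : ℕ) : ℝ :=
  ∑' m : ℕ, (Nat.choose (n - 1 + m) m : ℝ) *
    ((1 - p1) / 2) ^ (n - 1) * ((1 - p2) / 2) ^ m * (p1 / 2)

lemma probN1Y1_eq (p1 p2 : ℝ) (hp2 : p2 ∈ Set.Ioo (0:ℝ) 1) (n : ℕ) :
    probN1Y1 p1 p2 n =
      ((1 - p1) / 2) ^ (n - 1) * (p1 / 2) * (1 / ((1 + p2) / 2) ^ (n - 1 + 1)) := by
  obtain ⟨h0, h1⟩ := hp2
  have hb : ‖(1 - p2) / 2‖ < 1 := by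
    rw [Real.norm_eq_abs, abs_div, abs_of_pos (by linarith), abs_of_pos (by norm_num)]
    rw [div_lt_one (by norm_num)]; linarith
  have key : ∑' m : ℕ, ((m + (n - 1)).choose (n - 1) : ℝ) * ((1 - p2) / 2) ^ m =
      1 / (1 - (1 - p2) / 2) ^ ((n - 1) + 1) :=
    tsum_choose_mul_geometric_of_norm_lt_one (n - 1) hb
  unfold probN1Y1
  have hc : ∀ m : ℕ, ((n - 1 + m).choose m : ℝ) = ((m + (n - 1)).choose (n - 1) : ℝ) := by
    intro m
    have h := Nat.choose_symm (Nat.le_add_left m (n - 1))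
    rw [Nat.add_sub_cancel] at h
    rw [Nat.add_comm m (n - 1)]
    exact_mod_cast h.symm
  calc ∑' m : ℕ, (Nat.choose (n - 1 + m) m : ℝ) *
        ((1 - p1) / 2) ^ (n - 1) * ((1 - p2) / 2) ^ m * (p1 / 2)
      = ∑' m : ℕ, (((m + (n - 1)).choose (n - 1) : ℝ) * ((1 - p2) / 2) ^ m) *
        (((1 - p1) / 2) ^ (n - 1) * (p1 / 2)) := by
        apply tsum_congr; intro m; rw [hc m]; ring
    _ = (1 / (1 - (1 - p2) / 2) ^ ((n - 1) + 1)) *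
        (((1 - p1) / 2) ^ (n - 1) * (p1 / 2)) := by rw [tsum_mul_right, key]
    _ = ((1 - p1) / 2) ^ (n - 1) * (p1 / 2) * (1 / ((1 + p2) / 2) ^ (n - 1 + 1)) := by
        rw [show (1:ℝ) - (1 - p2) / 2 = (1 + p2) / 2 by ring]; ring

theorem stmt2 (p1 p2 : ℝ) (hp1 : p1 ∈ Set.Ioo (0:ℝ) 1) (hp2 : p2 ∈ Set.Ioo (0:ℝ) 1) :
    (∀ n : ℕ, 1 ≤ n →
      probN1Y1 p1 p2 n / (p1 / (p1 + p2)) =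
        (1 - (p1 + p2) / (1 + p2)) ^ (n - 1) * ((p1 + p2) / (1 + p2))) ∧
    (∑' n : ℕ, ((n : ℝ) + 1) * (probN1Y1 p1 p2 (n + 1) / (p1 / (p1 + p2))) =
      (1 + p2) / (p1 + p2)) := by
  obtain ⟨h10, h11⟩ := hp1
  obtain ⟨h20, h21⟩ := hp2
  have h1p2 : (0:ℝ) < 1 + p2 := by linarith
  have hq : (1:ℝ) - (p1 + p2) / (1 + p2) = (1 - p1) / (1 + p2) := by
    field_simp
    ring
  have ratio : ∀ n : ℕ, 1 ≤ n → probN1Y1 p1 p2 n / (p1 / (p1 + p2)) =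
      ((1 - p1) / (1 + p2)) ^ (n - 1) * ((p1 + p2) / (1 + p2)) := by
    intro n hn
    rw [probN1Y1_eq p1 p2 ⟨h20, h21⟩ n, div_pow]
    rw [show n - 1 + 1 = (n - 1) + 1 from rfl, pow_succ]
    have hc : ((1 + p2) / 2 : ℝ) ≠ 0 := by intro h; nlinarith [h]
    have hck : ((1 + p2) / 2 : ℝ) ^ (n - 1) ≠ 0 := pow_ne_zero _ hc
    field_simp
    rw [← mul_pow, ← mul_pow]
    congr 1
    have hinv : (1 + p2)⁻¹ * (1 + p2) = 1 := inv_mul_cancel₀ (ne_of_gt h1p2)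
    linear_combination (p1 - 1) * hinv
  constructor
  · intro n hn
    rw [ratio n hn, hq]
  · have hrn : ∀ n : ℕ, probN1Y1 p1 p2 (n + 1) / (p1 / (p1 + p2)) =
        ((1 - p1) / (1 + p2)) ^ n * ((p1 + p2) / (1 + p2)) := by
      intro n
      simpa using ratio (n + 1) (by omega)
    have hr : ‖(1 - p1) / (1 + p2)‖ < 1 := by
      rw [Real.norm_eq_abs, abs_of_pos (by apply div_pos <;> linarith), div_lt_one h1p2]; linarith
    have key : ∑' n : ℕ, ((n + 1).choose 1 : ℝ) * ((1 - p1) / (1 + p2)) ^ n =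
        1 / (1 - (1 - p1) / (1 + p2)) ^ 2 :=
      tsum_choose_mul_geometric_of_norm_lt_one 1 hr
    simp only [Nat.choose_one_right, Nat.cast_add, Nat.cast_one] at key
    calc ∑' n : ℕ, ((n : ℝ) + 1) * (probN1Y1 p1 p2 (n + 1) / (p1 / (p1 + p2)))
        = ∑' n : ℕ, (((n:ℝ) + 1) * ((1 - p1) / (1 + p2)) ^ n) * ((p1 + p2) / (1 + p2)) := by
          apply tsum_congr; intro n; rw [hrn n]; ring
      _ = (1 / (1 - (1 - p1) / (1 + p2)) ^ 2) * ((p1 + p2) / (1 + p2)) := by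
          rw [tsum_mul_right, key]
      _ = (1 + p2) / (p1 + p2) := by
          rw [show (1:ℝ) - (1 - p1) / (1 + p2) = (p1 + p2) / (1 + p2) by field_simp; ring, div_pow]
          field_simp
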